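/- If the subgroup lattice of a finite group G is Eulerian, then it is Boolean (equivalently, G is cyclic of square-free order). -/

import Mathlib

open Subgroup Pointwise

universe u

section Helpers

variable {G : Type*} [Group G]

lemma helper_pow_card_mem {L : Subgroup G} {x : G} (hx : x ∈ L) : x ^ Nat.card L = 1 :=
  orderOf_dvd_iff_pow_eq_one.mp (L.orderOf_dvd_natCard hx)

lemma helper_dvd_prime_mul {p q d : ℕ} (hp : p.Prime) (hq : q.Prime) (hd : d ∣ p * q) :
    d = 1 ∨ d = p ∨ d = q ∨ d = p * q := by
  by_cases h : p ∣ d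
  · obtain ⟨e, rfl⟩ := h
    have he : e ∣ q := (Nat.mul_dvd_mul_iff_left hp.pos).mp hd
    rcases (Nat.Prime.eq_one_or_self_of_dvd hq e he) with rfl | rfl
    · exact Or.inr (Or.inl (mul_one p))
    · exact Or.inr (Or.inr (Or.inr rfl))
  · have hcop : Nat.Coprime d p := Nat.Coprime.symm ((Nat.Prime.coprime_iff_not_dvd hp).mpr h)
    have hdq : d ∣ q := hcop.dvd_of_dvd_mul_left hd
    rcases (Nat.Prime.eq_one_or_self_of_dvd hq d hdq) with rfl | rfl
    · exact Or.inl rfl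
    · exact Or.inr (Or.inr (Or.inl rfl))

lemma helper_le_zpowers {κ : G} {q s : ℕ} (hq : q ≠ 0) (horder : orderOf κ = q * s)
    (R : Subgroup G) (hR : R ≤ zpowers κ) (hpow : ∀ x ∈ R, x ^ q = 1) :
    R ≤ zpowers (κ ^ s) := by
  intro x hx
  obtain ⟨i, hi⟩ := mem_zpowers_iff.mp (hR hx)
  have h1 : κ ^ (i * q) = 1 := by
    rw [zpow_mul, hi, zpow_natCast]
    exact hpow x hx
  have h2 : ((q * s : ℕ) : ℤ) ∣ i * q := by
    rw [← horder]; exact orderOf_dvd_iff_zpow_eq_one.mpr h1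
  have h3 : (s : ℤ) ∣ i := by
    obtain ⟨c, hc⟩ := h2
    refine ⟨c, mul_right_cancel₀ (b := (q : ℤ)) (Int.natCast_ne_zero.mpr hq) ?_⟩
    rw [hc]; push_cast; ring
  obtain ⟨j, rfl⟩ := h3
  exact mem_zpowers_iff.mpr ⟨j, by rw [← zpow_natCast κ s, ← zpow_mul, ← hi]⟩

lemma helper_comm_of_prime_card {P : Subgroup G} {p : ℕ} (hp : p.Prime)
    (h : Nat.card P = p) : ∀ x ∈ P, ∀ y ∈ P, x * y = y * x := by
  haveI := Fact.mk hp
  haveI : IsCyclic P := isCyclic_of_prime_card h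
  letI := IsCyclic.commGroup (α := P)
  intro x hx y hy
  exact congrArg Subtype.val (mul_comm (⟨x, hx⟩ : P) ⟨y, hy⟩)

lemma helper_comm_closure {k : Set G} (hcomm : ∀ x ∈ k, ∀ y ∈ k, x * y = y * x)
    {x y : G} (hx : x ∈ closure k) (hy : y ∈ closure k) : x * y = y * x :=
  Set.centralizer_centralizer_comm_of_comm hcomm x (closure_le_centralizer_centralizer k hx)
    y (closure_le_centralizer_centralizer k hy)

variable [Finite G]

lemma helper_card_lt {H K : Subgroup G} (h : H < K) : Nat.card H < Nat.card K := by
  have hd : Nat.card H ∣ Nat.card K := card_dvd_of_le h.le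
  have hne : Nat.card H ≠ Nat.card K := fun he => h.ne (eq_of_le_of_card_ge h.le he.ge)
  exact lt_of_le_of_ne (Nat.le_of_dvd Nat.card_pos hd) hne

omit [Finite G] in
lemma helper_ne_bot {L : Subgroup G} {r : ℕ} (hr : 1 < r) (h : Nat.card L = r) : ⊥ < L := by
  refine bot_lt_iff_ne_bot.mpr fun hb => ?_
  rw [hb, card_bot] at h
  omega

lemma helper_cauchy {p : ℕ} (hp : p.Prime) (S : Subgroup G)
    (hdvd : p ∣ Nat.card S) : ∃ L : Subgroup G, Nat.card L = p ∧ ⊥ < L ∧ L ≤ S := by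
  haveI := Fact.mk hp
  obtain ⟨x, hx⟩ := exists_prime_orderOf_dvd_card' (G := S) p hdvd
  have hcard : Nat.card (map S.subtype (zpowers x)) = p := by
    rw [← Nat.card_congr ((zpowers x).equivMapOfInjective S.subtype S.subtype_injective).toEquiv,
      Nat.card_zpowers, hx]
  exact ⟨map S.subtype (zpowers x), hcard, helper_ne_bot hp.one_lt hcard, map_subtype_le _⟩

lemma helper_mid {p q : ℕ} (hp : p.Prime) (hq : q.Prime)
    {S L : Subgroup G} (hS : Nat.card S = p * q) (h1 : ⊥ < L) (h2 : L < S) :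
    (Nat.card L = p ∨ Nat.card L = q) ∧ (⊥ ⋖ L) ∧ (L ⋖ S) := by
  have hdL : Nat.card L ∣ p * q := hS ▸ card_dvd_of_le h2.le
  have hL1 : 1 < Nat.card L := by
    have := helper_card_lt h1; rwa [card_bot] at this
  have hLpq : Nat.card L ≠ p * q := fun h => (helper_card_lt h2).ne (h.trans hS.symm)
  have hcases : Nat.card L = p ∨ Nat.card L = q := by
    rcases helper_dvd_prime_mul hp hq hdL with h | h | h | h
    · omega
    · exact Or.inl h
    · exact Or.inr h
    · exact absurd h hLpq
  refine ⟨hcases, ⟨h1, ?_⟩, ⟨h2, ?_⟩⟩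
  · intro M hM hML
    have hdM : Nat.card M ∣ Nat.card L := card_dvd_of_le hML.le
    have hlt := helper_card_lt hML
    have hM1 : 1 < Nat.card M := by
      have := helper_card_lt hM; rwa [card_bot] at this
    rcases hcases with h | h <;> rw [h] at hdM hlt
    · rcases hp.eq_one_or_self_of_dvd _ hdM with h' | h' <;> omega
    · rcases hq.eq_one_or_self_of_dvd _ hdM with h' | h' <;> omega
  · intro M hM hMS
    have hdM : Nat.card M ∣ p * q := hS ▸ card_dvd_of_le hMS.le
    have hLM : Nat.card L ∣ Nat.card M := card_dvd_of_le hM.le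
    have hlt1 := helper_card_lt hM
    have hlt2 := helper_card_lt hMS
    rw [hS] at hlt2
    rcases helper_dvd_prime_mul hp hq hdM with h | h | h | h
    · omega
    · rcases hcases with h' | h' <;> rw [h'] at hLM hlt1 <;> rw [h] at hLM hlt1
      · omega
      · have := (Nat.prime_dvd_prime_iff_eq hq hp).mp hLM; omega
    · rcases hcases with h' | h' <;> rw [h'] at hLM hlt1 <;> rw [h] at hLM hlt1
      · have := (Nat.prime_dvd_prime_iff_eq hp hq).mp hLM; omega
      · omega
    · omega

end Helpers

lemma helper_main : ∀ (n : ℕ) (H : Type u) (_ : Group H) (_ : Finite H),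
    Nat.card H = n → Squarefree n →
    (∀ p q : ℕ, p.Prime → q.Prime → p ≠ q → ∀ S : Subgroup H, Nat.card S = p * q →
      ∀ x ∈ S, ∀ y ∈ S, x * y = y * x) → IsCyclic H := by
  intro n
  induction n using Nat.strong_induction_on with
  | _ n ih =>
  intro H _ _ hcard hsf hcomm
  rcases eq_or_ne n 1 with rfl | hn1
  · haveI := (Nat.card_eq_one_iff_unique.mp hcard).1
    exact isCyclic_of_subsingleton
  have hn0 : n ≠ 0 := hsf.ne_zero
  set p := n.minFac with hpdef
  have hp : p.Prime := Nat.minFac_prime hn1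
  haveI := Fact.mk hp
  obtain ⟨P⟩ : Nonempty (Sylow p H) := inferInstance
  have hPcard : Nat.card P = p := by
    rw [Sylow.card_eq_multiplicity, hcard]
    have h1 : n.factorization p ≤ 1 := hsf.natFactorization_le_one p
    have h2 : 0 < n.factorization p := hp.factorization_pos_of_dvd hn0 (Nat.minFac_dvd n)
    rw [show n.factorization p = 1 by omega, pow_one]
  haveI : IsCyclic (P : Subgroup H) := isCyclic_of_prime_card hPcard
  -- Burnside hypothesis
  have hP : normalizer (P : Set H) ≤ Subgroup.centralizer (P : Set H) := by
    intro g hg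
    set x : (normalizer (P : Set H)) := ⟨g, hg⟩ with hx
    set φ := (P : Subgroup H).normalizerMonoidHom with hφ
    haveI : Finite (MulAut (P : Subgroup H)) :=
      Finite.of_injective _ (DFunLike.coe_injective (F := MulAut (P : Subgroup H)))
    have h1 : orderOf (φ x) ∣ p - 1 := by
      have h := orderOf_dvd_natCard (φ x)
      rwa [IsCyclic.card_mulAut, hPcard, Nat.totient_prime hp] at h
    have h2 : orderOf (φ x) ∣ n := by
      refine (orderOf_map_dvd φ x).trans ((orderOf_dvd_natCard x).trans ?_)
      rw [← hcard]; exact card_subgroup_dvd_card _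
    have h3 : orderOf (φ x) = 1 := by
      by_contra h
      set r := (orderOf (φ x)).minFac with hr
      have hrp : r.Prime := Nat.minFac_prime h
      have hr1 : r ∣ p - 1 := (Nat.minFac_dvd _).trans h1
      have hr2 : r ∣ n := (Nat.minFac_dvd _).trans h2
      have hle : p ≤ r := Nat.minFac_le_of_dvd hrp.two_le hr2
      have hlt : r ≤ p - 1 := Nat.le_of_dvd (by have := hp.two_le; omega) hr1
      have := hp.two_le
      omega
    have h4 : x ∈ φ.ker := by
      rw [MonoidHom.mem_ker, ← orderOf_eq_one_iff, h3]
    rw [hφ, normalizerMonoidHom_ker] at h4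
    exact mem_subgroupOf.mp h4
  set K := (MonoidHom.transferSylow P hP).ker with hK
  have hcomp : K.IsComplement' P := MonoidHom.ker_transferSylow_isComplement' P hP
  set m := Nat.card K with hm
  have hm0 : m ≠ 0 := Nat.card_pos.ne'
  have hmp : m * p = n := by rw [hm, ← hcard, ← hPcard]; exact hcomp.card_mul
  have hsfm : Squarefree m := hsf.squarefree_of_dvd ⟨p, hmp.symm⟩
  have hcopmp : Nat.Coprime m p := (Nat.squarefree_mul_iff.mp (hmp ▸ hsf)).1
  -- K is cyclic by induction
  have hmlt : m < n := by
    have := hp.two_le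
    have hmpos : 0 < m := Nat.pos_of_ne_zero hm0
    nlinarith
  have hKcyc : IsCyclic K := by
    refine ih m hmlt K inferInstance inferInstance rfl hsfm ?_
    intro p' q' hp' hq' hne S' hS' x hx y hy
    have hcard' : Nat.card (map K.subtype S') = p' * q' := by
      rw [← Nat.card_congr (S'.equivMapOfInjective K.subtype K.subtype_injective).toEquiv, hS']
    have := hcomm p' q' hp' hq' hne (map K.subtype S') hcard'
      (x : H) ⟨x, hx, rfl⟩ (y : H) ⟨y, hy, rfl⟩
    exact Subtype.ext (by push_cast; exact this)
  obtain ⟨k, hk⟩ := IsCyclic.exists_ofOrder_eq_natCard (α := K)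
  set κ : H := (k : H) with hκ
  have hκK : κ ∈ K := k.2
  have hκord : orderOf κ = m := by
    rw [hκ, show ((k : H)) = K.subtype k from rfl,
      orderOf_injective K.subtype K.subtype_injective k, hk]
  have hKz : zpowers κ = K := by
    refine eq_of_le_of_card_ge (zpowers_le.mpr hκK) ?_
    rw [Nat.card_zpowers, hκord]
  -- element of order p
  obtain ⟨g, hg⟩ := exists_prime_orderOf_dvd_card' (G := H) p
    (by rw [hcard]; exact Nat.minFac_dvd n)
  -- commuting step
  have hcommg : ∀ q : ℕ, q.Prime → q ∣ m →
      ∃ s : ℕ, orderOf (κ ^ s) = q ∧ g * κ ^ s = κ ^ s * g := by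
    intro q hq hqm
    obtain ⟨s, hs⟩ := hqm
    have hs0 : s ≠ 0 := by rintro rfl; rw [mul_zero] at hs; exact hm0 hs
    have hqp : q ≠ p := by
      intro hqp'
      have hd : q ∣ Nat.gcd m p := Nat.dvd_gcd ⟨s, hs⟩ (hqp' ▸ dvd_rfl)
      rw [Nat.Coprime.gcd_eq_one hcopmp] at hd
      exact hq.one_lt.ne' (Nat.dvd_one.mp hd)
    have hword : orderOf (κ ^ s) = q := by
      rw [orderOf_pow, hκord, hs, Nat.gcd_eq_right ⟨q, mul_comm q s⟩,
        Nat.mul_div_cancel _ (Nat.pos_of_ne_zero hs0)]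
    set w := κ ^ s with hw
    set Q := zpowers w with hQ
    have hQcard : Nat.card Q = q := by rw [hQ, Nat.card_zpowers, hword]
    have hQK : Q ≤ K := by
      rw [← hKz]; exact zpowers_le.mpr (pow_mem (mem_zpowers κ) s)
    haveI hQnormal : Q.Normal := by
      constructor
      intro x hxQ h
      have hRle : map (MulAut.conj h).toMonoidHom Q ≤ zpowers κ := by
        rw [hKz]
        rintro _ ⟨w', hw', rfl⟩
        have hw'K : w' ∈ K := hQK hw'
        have e : (MulAut.conj h).toMonoidHom w' = h * w' * h⁻¹ := rfl
        rw [e]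
        exact (MonoidHom.normal_ker _).conj_mem w' hw'K h
      have hRpow : ∀ x' ∈ map (MulAut.conj h).toMonoidHom Q, x' ^ q = 1 := by
        rintro _ ⟨w', hw', rfl⟩
        have h1 : w' ^ q = 1 := by
          have := helper_pow_card_mem (L := Q) hw'; rwa [hQcard] at this
        rw [← map_pow, h1, map_one]
      have hle2 := helper_le_zpowers hq.ne_zero (by rw [hκord, hs]) _ hRle hRpow
      have hmem : (MulAut.conj h).toMonoidHom x ∈ map (MulAut.conj h).toMonoidHom Q :=
        mem_map_of_mem _ hxQ
      have hxx := hle2 hmem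
      rw [← hw] at hxx
      have e : (MulAut.conj h).toMonoidHom x = h * x * h⁻¹ := rfl
      rwa [e] at hxx
    set Z := zpowers g with hZ
    have hZcard : Nat.card Z = p := by rw [hZ, Nat.card_zpowers, hg]
    set S := Q ⊔ Z with hS'
    have hcopqp : Nat.Coprime q p := Nat.Coprime.coprime_dvd_left ⟨s, hs⟩ hcopmp
    have hdvd1 : q * p ∣ Nat.card S := Nat.Coprime.mul_dvd_of_dvd_of_dvd hcopqp
      (hQcard ▸ card_dvd_of_le le_sup_left) (hZcard ▸ card_dvd_of_le le_sup_right)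
    have hle : Nat.card S ≤ q * p := by
      have hset : ((S : Set H)) = (Q : Set H) * (Z : Set H) := normal_mul Q Z
      calc Nat.card S = Nat.card ((S : Set H)) := by rw [SetLike.coe_sort_coe]
        _ ≤ Nat.card ((Q : Set H)) * Nat.card ((Z : Set H)) := by
            rw [hset]; exact Set.natCard_mul_le
        _ = q * p := by rw [SetLike.coe_sort_coe, SetLike.coe_sort_coe, hQcard, hZcard]
    have hScard : Nat.card S = q * p := le_antisymm hle (Nat.le_of_dvd Nat.card_pos hdvd1)
    have hcommS := hcomm q p hq hp hqp S hScard
    have hgS : g ∈ S := (le_sup_right : Z ≤ S) (mem_zpowers g)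
    have hwS : w ∈ S := (le_sup_left : Q ≤ S) (mem_zpowers w)
    exact ⟨s, hword, hcommS g hgS w hwS⟩
  -- K centralizes g
  set D := K ⊓ Subgroup.centralizer {g} with hD
  have hDK : D ≤ K := inf_le_left
  have hdm : Nat.card D ∣ m := hm ▸ card_dvd_of_le hDK
  have hDm : Nat.card D = m := by
    by_contra hne
    obtain ⟨t, ht⟩ := hdm
    have ht1 : t ≠ 1 := by rintro rfl; rw [mul_one] at ht; exact hne ht.symm
    set r := t.minFac with hr
    have hrp : r.Prime := Nat.minFac_prime ht1
    have hrt : r ∣ t := Nat.minFac_dvd t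
    have hrm : r ∣ m := hrt.trans ⟨Nat.card D, by rw [ht]; ring⟩
    obtain ⟨s, hword, hgw⟩ := hcommg r hrp hrm
    have h1 : κ ^ s ∈ K := by rw [← hKz]; exact pow_mem (mem_zpowers κ) s
    have h2 : κ ^ s ∈ Subgroup.centralizer {g} := by
      rw [mem_centralizer_iff]
      intro h hh
      rw [Set.mem_singleton_iff] at hh; subst hh; exact hgw
    have h3 : zpowers (κ ^ s) ≤ D := zpowers_le.mpr (mem_inf.mpr ⟨h1, h2⟩)
    have h4 : r ∣ Nat.card D := by
      have hc : Nat.card (zpowers (κ ^ s)) = r := by rw [Nat.card_zpowers, hword]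
      exact hc ▸ card_dvd_of_le h3
    have h5 : r * r ∣ m := by rw [ht]; exact mul_dvd_mul h4 hrt
    exact hrp.one_lt.ne' (Nat.isUnit_iff.mp (hsfm r h5))
  have hKD : K = D := (eq_of_le_of_card_ge hDK (by rw [hDm])).symm
  have hcommκg : Commute κ g := by
    have hmem : κ ∈ D := hKD ▸ hκK
    have h2 := (mem_inf.mp hmem).2
    rw [mem_centralizer_iff] at h2
    exact (h2 g (Set.mem_singleton g)).symm
  have horder : orderOf (κ * g) = n := by
    rw [hcommκg.orderOf_mul_eq_mul_orderOf_of_coprime (by rw [hκord, hg]; exact hcopmp),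
      hκord, hg, hmp]
  exact isCyclic_of_orderOf_eq_card (κ * g) (by rw [horder, hcard])

open scoped Classical in
/-- If the subgroup lattice of a finite group `G` is Eulerian (graded with
`μ(a,b) = (-1)^{rank b - rank a}` for `a ≤ b`), then it is Boolean,
equivalently `G` is cyclic of square-free order. -/
theorem stmt9 {G : Type*} [Group G] [Fintype G]
    (μ : Subgroup G → Subgroup G → ℤ)
    (hμ_self : ∀ K : Subgroup G, μ K K = 1)
    (hμ_lt : ∀ K K' : Subgroup G, K < K' →
      μ K K' = -∑ L ∈ Finset.univ.filter (fun L : Subgroup G => K < L ∧ L ≤ K'), μ L K')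
    (rk : Subgroup G → ℕ)
    (hgraded : ∀ a b : Subgroup G, a ⋖ b → rk b = rk a + 1)
    (hEulerian : ∀ a b : Subgroup G, a ≤ b → μ a b = (-1) ^ (rk b - rk a)) :
    IsCyclic G ∧ Squarefree (Nat.card G) := by
  classical
  -- counting lemma: certain "rank two" intervals have exactly two interior elements
  have key : ∀ a b : Subgroup G, a < b →
      (∀ L : Subgroup G, a < L → L < b → (a ⋖ L ∧ L ⋖ b)) →
      (∃ L : Subgroup G, a < L ∧ L < b) →
      (Finset.univ.filter fun L : Subgroup G => a < L ∧ L < b).card = 2 := by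
    rintro a b hab hmid ⟨L0, hL01, hL02⟩
    have hcov := hmid L0 hL01 hL02
    have hrk0 := hgraded a L0 hcov.1
    have hrkb := hgraded L0 b hcov.2
    have hsplit : (Finset.univ.filter fun L : Subgroup G => a < L ∧ L ≤ b)
        = insert b (Finset.univ.filter fun L : Subgroup G => a < L ∧ L < b) := by
      ext L
      simp only [Finset.mem_filter, Finset.mem_univ, true_and, Finset.mem_insert]
      constructor
      · rintro ⟨h1, h2⟩
        rcases h2.lt_or_eq with h | h
        · exact Or.inr ⟨h1, h⟩
        · exact Or.inl h
      · rintro (rfl | ⟨h1, h2⟩)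
        · exact ⟨hab, le_rfl⟩
        · exact ⟨h1, h2.le⟩
    have hbnot : b ∉ (Finset.univ.filter fun L : Subgroup G => a < L ∧ L < b) := by simp
    have hμab := hμ_lt a b hab
    rw [hsplit, Finset.sum_insert hbnot, hμ_self] at hμab
    have hsum : ∑ L ∈ (Finset.univ.filter fun L : Subgroup G => a < L ∧ L < b), μ L b
        = -(((Finset.univ.filter fun L : Subgroup G => a < L ∧ L < b).card : ℤ)) := by
      rw [Finset.sum_congr rfl (g := fun _ => (-1 : ℤ)) ?_]
      · rw [Finset.sum_const, nsmul_eq_mul, mul_neg_one]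
      · intro L hL
        rw [Finset.mem_filter] at hL
        obtain ⟨-, h1, h2⟩ := hL
        have hc := hmid L h1 h2
        have h3 := hgraded a L hc.1
        have h4 := hgraded L b hc.2
        rw [hEulerian L b h2.le, show rk b - rk L = 1 by omega, pow_one]
    rw [hsum] at hμab
    have hEab := hEulerian a b hab.le
    rw [show rk b - rk a = 2 by omega] at hEab
    norm_num at hEab
    rw [hEab] at hμab
    have h2 : (((Finset.univ.filter fun L : Subgroup G => a < L ∧ L < b).card : ℤ)) = 2 := by
      linarith
    exact_mod_cast h2
  -- for subgroups of order pq, there are exactly two interior subgroups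
  have pairkey : ∀ p q : ℕ, p.Prime → q.Prime → ∀ S : Subgroup G, Nat.card S = p * q →
      ∃ L1 L2 : Subgroup G, L1 ≠ L2 ∧ (∀ L : Subgroup G, ⊥ < L → L < S → L = L1 ∨ L = L2) ∧
        (⊥ < L1 ∧ L1 < S) ∧ (⊥ < L2 ∧ L2 < S) := by
    intro p q hp hq S hS
    obtain ⟨L0, hL0c, hL0b, hL0le⟩ := helper_cauchy hp S (by rw [hS]; exact dvd_mul_right p q)
    have hL0lt : L0 < S := lt_of_le_of_ne hL0le (fun he => by
      rw [he, hS] at hL0c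
      nlinarith [hp.two_le, hq.two_le])
    have hbotS : ⊥ < S := lt_trans hL0b hL0lt
    have hcard2 := key ⊥ S hbotS (fun L h1 h2 => (helper_mid hp hq hS h1 h2).2) ⟨L0, hL0b, hL0lt⟩
    rw [Finset.card_eq_two] at hcard2
    obtain ⟨L1, L2, hne, hset⟩ := hcard2
    have hmem : ∀ L : Subgroup G, ⊥ < L → L < S → L = L1 ∨ L = L2 := by
      intro L h1 h2
      have hL : L ∈ Finset.univ.filter (fun L : Subgroup G => ⊥ < L ∧ L < S) := by
        simp [h1, h2]
      rw [hset] at hL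
      simpa using hL
    have h1 : ⊥ < L1 ∧ L1 < S := by
      have hL : L1 ∈ Finset.univ.filter (fun L : Subgroup G => ⊥ < L ∧ L < S) := by
        rw [hset]; simp
      simpa using hL
    have h2 : ⊥ < L2 ∧ L2 < S := by
      have hL : L2 ∈ Finset.univ.filter (fun L : Subgroup G => ⊥ < L ∧ L < S) := by
        rw [hset]; simp
      simpa using hL
    exact ⟨L1, L2, hne, hmem, h1, h2⟩
  -- no prime square divides the order of G
  have hA : ∀ p : ℕ, p.Prime → ¬(p * p ∣ Nat.card G) := by
    intro p hp hdvd
    haveI := Fact.mk hp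
    obtain ⟨H, hH⟩ := Sylow.exists_subgroup_card_pow_prime (G := G) p (n := 2) (by rwa [pow_two])
    rw [pow_two] at hH
    obtain ⟨L1, L2, hne, huniq, ⟨hb1, hs1⟩, ⟨hb2, hs2⟩⟩ := pairkey p p hp hp H hH
    have hc1 : Nat.card L1 = p := by
      rcases (helper_mid hp hp hH hb1 hs1).1 with h | h <;> exact h
    have hc2 : Nat.card L2 = p := by
      rcases (helper_mid hp hp hH hb2 hs2).1 with h | h <;> exact h
    have hsub : ¬((H : Set G) ⊆ (L1 : Set G) ∪ (L2 : Set G)) := by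
      intro hsub
      have e1 : Nat.card H ≤ ((L1 : Set G) ∪ (L2 : Set G)).ncard := by
        have : Nat.card H = ((H : Set G)).ncard := by
          rw [← Nat.card_coe_set_eq, SetLike.coe_sort_coe]
        rw [this]
        exact Set.ncard_le_ncard hsub (Set.toFinite _)
      have e2 := Set.ncard_inter_add_ncard_union (L1 : Set G) (L2 : Set G)
        (Set.toFinite _) (Set.toFinite _)
      have e3 : 0 < ((L1 : Set G) ∩ (L2 : Set G)).ncard :=
        (Set.ncard_pos (Set.toFinite _)).mpr ⟨1, one_mem _, one_mem _⟩
      have e4 : ((L1 : Set G)).ncard = p := by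
        rw [← Nat.card_coe_set_eq, SetLike.coe_sort_coe]; exact hc1
      have e5 : ((L2 : Set G)).ncard = p := by
        rw [← Nat.card_coe_set_eq, SetLike.coe_sort_coe]; exact hc2
      rw [hH] at e1
      rw [e4, e5] at e2
      have := hp.two_le
      nlinarith
    obtain ⟨z, hzH, hz12⟩ := Set.not_subset.mp hsub
    have hz1 : z ∉ L1 := fun h => hz12 (Set.mem_union_left _ h)
    have hz2 : z ∉ L2 := fun h => hz12 (Set.mem_union_right _ h)
    have hzle : zpowers z ≤ H := zpowers_le.mpr hzH
    have hzd : Nat.card (zpowers z) ∣ p * p := hH ▸ card_dvd_of_le hzle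
    have hz1' : Nat.card (zpowers z) ≠ 1 := by
      rw [Nat.card_zpowers]
      intro h
      exact hz1 (by rw [orderOf_eq_one_iff.mp h]; exact one_mem L1)
    have hnotp : Nat.card (zpowers z) ≠ p := by
      intro h
      have hzb : ⊥ < zpowers z := helper_ne_bot hp.one_lt h
      have hzlt : zpowers z < H := lt_of_le_of_ne hzle (fun he => by
        rw [he, hH] at h
        nlinarith [hp.two_le])
      rcases huniq _ hzb hzlt with he | he
      · exact hz1 (he ▸ mem_zpowers z)
      · exact hz2 (he ▸ mem_zpowers z)
    have hzc : Nat.card (zpowers z) = p * p := by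
      rcases helper_dvd_prime_mul hp hp hzd with h | h | h | h
      · exact absurd h hz1'
      · exact absurd h hnotp
      · exact absurd h hnotp
      · exact h
    have hzH' : zpowers z = H := eq_of_le_of_card_ge hzle (by rw [hH, hzc])
    have hzord : orderOf z = p * p := by rw [← Nat.card_zpowers, hzc]
    have hkey : ∀ L : Subgroup G, Nat.card L = p → L < H → L = zpowers (z ^ p) := by
      intro L hc hlt
      have hle1 : L ≤ zpowers (z ^ p) := by
        refine helper_le_zpowers hp.ne_zero hzord L ?_ ?_
        · rw [hzH']; exact hlt.le
        · intro x hx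
          have := helper_pow_card_mem (L := L) hx
          rwa [hc] at this
      have hle2 : Nat.card (zpowers (z ^ p)) = p := by
        rw [Nat.card_zpowers, orderOf_pow, hzord,
          Nat.gcd_eq_right (dvd_mul_left p p), Nat.mul_div_cancel _ hp.pos]
      exact eq_of_le_of_card_ge hle1 (by rw [hc, hle2])
    exact hne ((hkey L1 hc1 hs1).trans (hkey L2 hc2 hs2).symm)
  have hsf : Squarefree (Nat.card G) := by
    rw [Nat.squarefree_iff_prime_squarefree]
    intro x hx
    exact hA x hx
  -- subgroups of order pq are commutative
  have hB : ∀ p q : ℕ, p.Prime → q.Prime → p ≠ q → ∀ S : Subgroup G, Nat.card S = p * q →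
      ∀ x ∈ S, ∀ y ∈ S, x * y = y * x := by
    intro p q hp hq hpq S hS
    obtain ⟨L1, L2, hne, huniq, ⟨hb1, hs1⟩, ⟨hb2, hs2⟩⟩ := pairkey p q hp hq S hS
    obtain ⟨P, hPc, hPb, hPle⟩ := helper_cauchy hp S (by rw [hS]; exact dvd_mul_right p q)
    have hPlt : P < S := lt_of_le_of_ne hPle (fun he => by
      rw [he, hS] at hPc; nlinarith [hp.two_le, hq.two_le])
    obtain ⟨Q, hQc, hQb, hQle⟩ := helper_cauchy hq S (by rw [hS]; exact dvd_mul_left q p)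
    have hQlt : Q < S := lt_of_le_of_ne hQle (fun he => by
      rw [he, hS] at hQc; nlinarith [hp.two_le, hq.two_le])
    have hPQ : P ≠ Q := fun h => hpq (by rw [← hPc, h, hQc])
    have huniq' : ∀ L : Subgroup G, ⊥ < L → L < S → L = P ∨ L = Q := by
      intro L h1 h2
      have hL := huniq L h1 h2
      rcases huniq P hPb hPlt with h3 | h3 <;> rcases huniq Q hQb hQlt with h4 | h4
      · exact absurd (h3.trans h4.symm) hPQ
      · rcases hL with h5 | h5
        · exact Or.inl (h5.trans h3.symm)
        · exact Or.inr (h5.trans h4.symm)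
      · rcases hL with h5 | h5
        · exact Or.inr (h5.trans h4.symm)
        · exact Or.inl (h5.trans h3.symm)
      · exact absurd (h3.trans h4.symm) hPQ
    -- conjugation stability
    have hstab : ∀ (R : Subgroup G) (r : ℕ), r.Prime → Nat.card R = r → R < S →
        ∀ y ∈ S, ∀ x ∈ R, y * x * y⁻¹ ∈ R := by
      intro R r hr hRc hRlt y hy x hx
      set R' := map (MulAut.conj y).toMonoidHom R with hR'
      have hcR' : Nat.card R' = r := by
        rw [hR', ← Nat.card_congr (R.equivMapOfInjective (MulAut.conj y).toMonoidHom
          (MulAut.conj y).injective).toEquiv, hRc]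
      have hR'le : R' ≤ S := by
        rintro _ ⟨w, hw, rfl⟩
        have e : (MulAut.conj y).toMonoidHom w = y * w * y⁻¹ := rfl
        rw [e]
        exact mul_mem (mul_mem hy (hRlt.le hw)) (inv_mem hy)
      have hR'b : ⊥ < R' := helper_ne_bot hr.one_lt hcR'
      have hR'lt : R' < S := lt_of_le_of_ne hR'le (fun he => by
        rw [he, hS] at hcR'
        rcases hr.eq_one_or_self_of_dvd p ⟨q, hcR'.symm⟩ with h | h
        · exact hp.one_lt.ne' h
        · rw [← h] at hcR'
          nlinarith [hq.two_le, hp.two_le])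
      have hRb : ⊥ < R := helper_ne_bot hr.one_lt hRc
      have he2 : R' = R := by
        rcases huniq' R' hR'b hR'lt with h1 | h1 <;> rcases huniq' R hRb hRlt with h2 | h2
        · exact h1.trans h2.symm
        · exfalso; apply hpq; rw [← hPc, ← h1, hcR', ← hRc, h2, hQc]
        · exfalso; apply hpq; rw [← hPc, ← h2, hRc, ← hcR', h1, hQc]
        · exact h1.trans h2.symm
      have hmem : (MulAut.conj y).toMonoidHom x ∈ R' := mem_map_of_mem _ hx
      rw [he2] at hmem
      have e : (MulAut.conj y).toMonoidHom x = y * x * y⁻¹ := rfl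
      rwa [e] at hmem
    -- cross commutation
    have hcross : ∀ x ∈ P, ∀ z ∈ Q, x * z = z * x := by
      intro x hx z hz
      have hxS : x ∈ S := hPlt.le hx
      have hzS : z ∈ S := hQlt.le hz
      have c1 : x * z * x⁻¹ * z⁻¹ ∈ Q := by
        have h1 : x * z * x⁻¹ ∈ Q := hstab Q q hq hQc hQlt x hxS z hz
        exact mul_mem h1 (inv_mem hz)
      have c2 : x * z * x⁻¹ * z⁻¹ ∈ P := by
        have h1 : z * x⁻¹ * z⁻¹ ∈ P := hstab P p hp hPc hPlt z hzS x⁻¹ (inv_mem hx)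
        have h2 := mul_mem hx h1
        have e : x * (z * x⁻¹ * z⁻¹) = x * z * x⁻¹ * z⁻¹ := by group
        rwa [e] at h2
      have hPQbot : P ⊓ Q = ⊥ := by
        have hd1 : Nat.card (P ⊓ Q : Subgroup G) ∣ p := hPc ▸ card_dvd_of_le inf_le_left
        have hd2 : Nat.card (P ⊓ Q : Subgroup G) ∣ q := hQc ▸ card_dvd_of_le inf_le_right
        have hcop : Nat.Coprime p q := (Nat.coprime_primes hp hq).mpr hpq
        have := Nat.dvd_gcd hd1 hd2
        rw [Nat.Coprime.gcd_eq_one hcop] at this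
        exact Subgroup.card_eq_one.mp (Nat.dvd_one.mp this)
      have hmem : x * z * x⁻¹ * z⁻¹ ∈ P ⊓ Q := mem_inf.mpr ⟨c2, c1⟩
      rw [hPQbot, mem_bot] at hmem
      have : x * z = z * x := by
        have e : x * z = (x * z * x⁻¹ * z⁻¹) * (z * x) := by group
        rw [e, hmem, one_mul]
      exact this
    -- S is generated by P and Q
    have hsup : P ⊔ Q = S := by
      refine eq_of_le_of_card_ge (sup_le hPlt.le hQlt.le) ?_
      have h1 : p ∣ Nat.card (P ⊔ Q : Subgroup G) := hPc ▸ card_dvd_of_le le_sup_left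
      have h2 : q ∣ Nat.card (P ⊔ Q : Subgroup G) := hQc ▸ card_dvd_of_le le_sup_right
      have h3 : p * q ∣ Nat.card (P ⊔ Q : Subgroup G) :=
        Nat.Coprime.mul_dvd_of_dvd_of_dvd ((Nat.coprime_primes hp hq).mpr hpq) h1 h2
      rw [hS]
      exact Nat.le_of_dvd Nat.card_pos h3
    have hclo : S = closure ((P : Set G) ∪ (Q : Set G)) := by
      rw [Subgroup.closure_union, Subgroup.closure_eq, Subgroup.closure_eq, hsup]
    have hcommset : ∀ a ∈ (P : Set G) ∪ (Q : Set G), ∀ b ∈ (P : Set G) ∪ (Q : Set G),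
        a * b = b * a := by
      rintro a (ha | ha) b (hb | hb)
      · exact helper_comm_of_prime_card hp hPc a ha b hb
      · exact hcross a ha b hb
      · exact (hcross b hb a ha).symm
      · exact helper_comm_of_prime_card hq hQc a ha b hb
    intro x hx y hy
    rw [hclo] at hx hy
    exact helper_comm_closure hcommset hx hy
  exact ⟨helper_main (Nat.card G) G inferInstance inferInstance rfl hsf hB, hsf⟩
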